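/- arXiv:1704.05595 — 3 statements merged into one kernel-verified Lean document; each statement's English description precedes it below -/
import Mathlib

section
/- For every real number α ≥ 0 and all integers s ≥ 1 and x ≥ 1, S_{4,s,x}^{(α)} = ∑_{r=0}^{s} ∑_{p=0}^{s} ∑_{m=0}^{s} ∑_{k=1}^{x−r} ( C(x−k, r) · B_{s−r,p+1}(m+α; k) − (r+1) · C(x+1−k, r+1) · B_{s−r,p+1}(m+α−1; k) ) · C_{4,s}(r,p,m), where S_{4,s,x}^{(α)} is the coefficient of q^x in ∑_{i=1}^{x} i^{α−1} · Σ_{4,s}(q,i). -/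
open PowerSeries Finset

/-- Generalized sum-of-divisors function `σ_α(n) = ∑_{d ∣ n} d^α` (real powers). -/
noncomputable def sigma' (α : ℝ) (n : ℕ) : ℝ := ∑ d ∈ n.divisors, (d : ℝ) ^ α

/-- Bounded-divisor sum `σ_{α,m}(n) = ∑_{d ∣ n, d ≤ ⌊n/m⌋} d^α`. -/
noncomputable def sigmaB (α : ℝ) (m n : ℕ) : ℝ :=
  ∑ d ∈ n.divisors.filter (fun d => d ≤ n / m), (d : ℝ) ^ α

/-- Binomial-convolution divisor sum
`B_{k,m}(β; n) = ∑_{d ∣ n, d ≤ ⌊n/m⌋} C(n/d - m + k, k) d^β`. -/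
noncomputable def Bfun (k m : ℕ) (β : ℝ) (n : ℕ) : ℝ :=
  ∑ d ∈ n.divisors.filter (fun d => d ≤ n / m),
    ((n / d - m + k).choose k : ℝ) * (d : ℝ) ^ β

/-- Unsigned Stirling numbers of the first kind. -/
def stirling1 : ℕ → ℕ → ℕ
  | 0, 0 => 1
  | 0, _ + 1 => 0
  | _ + 1, 0 => 0
  | s + 1, m + 1 => s * stirling1 s (m + 1) + stirling1 s m

/-- Stirling numbers of the second kind. -/
def stirling2 : ℕ → ℕ → ℕ
  | 0, 0 => 1
  | 0, _ + 1 => 0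
  | _ + 1, 0 => 0
  | m + 1, k + 1 => (k + 1) * stirling2 m (k + 1) + stirling2 m k

/-- Binomial coefficient `C(z, j) = z(z-1)⋯(z-j+1)/j!` with integer top argument. -/
noncomputable def zchoose (z : ℤ) (j : ℕ) : ℝ :=
  (∏ i ∈ Finset.range j, ((z : ℝ) - (i : ℝ))) / (j.factorial : ℝ)

/-- Binomial coefficient `C(a, b)` with natural top and integer bottom argument,
zero when `b < 0`. -/
noncomputable def nchooseZ (a : ℕ) (b : ℤ) : ℝ :=
  if 0 ≤ b then (a.choose b.toNat : ℝ) else 0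

/-- The coefficients `C_{4,s}(r,p,m)`. -/
noncomputable def C4 (s r p m : ℕ) : ℝ :=
  ∑ k ∈ Finset.range (m + 1),
    (s.choose r : ℝ) * (stirling1 (s - r) m : ℝ) * (stirling2 m k : ℝ) *
      zchoose ((s : ℤ) - r - k) p * (-1 : ℝ) ^ ((s : ℤ) - r - k + p) *
      (k.factorial : ℝ) * (r.factorial : ℝ)

/-- The coefficients `C_{8,s}(r,p,n,w)`. -/
noncomputable def C8 (s r p n w : ℕ) : ℝ :=
  ∑ m ∈ Finset.range (s - r + 1), ∑ k ∈ Finset.range (m + 1),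
    ∑ m1 ∈ Finset.range (r + 1 - n + 1), ∑ m2 ∈ Finset.range (n + 1),
      (s.choose r : ℝ) * (stirling1 (s - r) m : ℝ) * (stirling2 m k : ℝ) *
        zchoose ((s : ℤ) - r - k) p * (stirling1 (r + 1 - n) m1 : ℝ) *
        (stirling1 n m2 : ℝ) * nchooseZ m2 ((w : ℤ) - m - m1) *
        (-1 : ℝ) ^ (s - k + p + n + m1 + m2) * (k.factorial : ℝ) *
        (((n : ℤ) - 2 - r : ℤ) : ℝ) ^ ((m : ℤ) + m1 + m2 - w)

/-- The component power series `Σ_{4,s}(q,i)` (formal power series over `ℝ`). -/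
noncomputable def Sigma4 (s i : ℕ) : PowerSeries ℝ :=
  ∑ r ∈ Finset.range (s + 1), ∑ p ∈ Finset.range (s + 1), ∑ m ∈ Finset.range (s + 1),
    PowerSeries.C (C4 s r p m) * X ^ ((p + 1) * i + r) * ((1 - X ^ i)⁻¹) ^ (s - r + 1) *
      (PowerSeries.C ((i : ℝ) ^ (m + 1)) * ((1 - X)⁻¹) ^ (r + 1) -
        PowerSeries.C (((r : ℝ) + 1) * (i : ℝ) ^ m) * ((1 - X)⁻¹) ^ (r + 2))

/-- The component power series `Σ_{8,s}(q,i)` (formal power series over `ℝ`). -/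
noncomputable def Sigma8 (s i : ℕ) : PowerSeries ℝ :=
  ∑ r ∈ Finset.range (s + 1), ∑ p ∈ Finset.range (s + 1),
    ∑ n ∈ Finset.range (r + 2), ∑ w ∈ Finset.range (s + 1),
      PowerSeries.C (C8 s r p n w * (i : ℝ) ^ w) * X ^ ((p + 2) * i + n - 1) *
        ((1 - X ^ i)⁻¹) ^ (s - r + 1) *
        (PowerSeries.C (r.choose n : ℝ) * ((1 - X)⁻¹) ^ (r + 1) -
          PowerSeries.C ((r + 1).choose n : ℝ) * ((1 - X)⁻¹) ^ (r + 2))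

/-- `S_{4,s,x}^{(α)}`: the coefficient of `q^x` in `∑_{i=1}^{max(x,1)} i^{α-1} Σ_{4,s}(q,i)`. -/
noncomputable def S4c (α : ℝ) (s x : ℕ) : ℝ :=
  PowerSeries.coeff x
    (∑ i ∈ Finset.Icc 1 (max x 1), PowerSeries.C ((i : ℝ) ^ (α - 1)) * Sigma4 s i)

/-- `S_{8,s,x}^{(α)}`: the coefficient of `q^x` in `∑_{i=1}^{x+1} i^{α-1} Σ_{8,s}(q,i)`. -/
noncomputable def S8c (α : ℝ) (s x : ℕ) : ℝ :=
  PowerSeries.coeff x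
    (∑ i ∈ Finset.Icc 1 (x + 1), PowerSeries.C ((i : ℝ) ^ (α - 1)) * Sigma8 s i)

/-! ### Auxiliary lemmas -/

lemma zchoose_natCast (n j : ℕ) : zchoose (n : ℤ) j = (n.choose j : ℝ) := by
  unfold zchoose
  have hprod : (∏ i ∈ Finset.range j, (((n : ℤ) : ℝ) - (i : ℝ))) = (n.descFactorial j : ℝ) := by
    rcases le_or_gt j n with h | h
    · rw [Nat.descFactorial_eq_prod_range, Nat.cast_prod]
      refine Finset.prod_congr rfl fun i hi => ?_
      rw [Finset.mem_range] at hi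
      rw [Nat.cast_sub (le_trans (le_of_lt hi) h)]
      push_cast; ring
    · rw [Nat.descFactorial_eq_zero_iff_lt.2 h, Nat.cast_zero]
      apply Finset.prod_eq_zero (Finset.mem_range.2 h)
      push_cast; ring
  rw [hprod, Nat.descFactorial_eq_factorial_mul_choose, Nat.cast_mul, mul_comm,
    mul_div_assoc, div_self (Nat.cast_ne_zero.2 j.factorial_ne_zero), mul_one]

lemma mul_mk_zero (i : ℕ) (hi : 1 ≤ i) :
    (1 - X ^ i : ℝ⟦X⟧) *
      PowerSeries.mk (fun a => if i ∣ a then (((a / i + 0).choose 0 : ℕ) : ℝ) else 0) = 1 := by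
  ext n
  rw [sub_mul, one_mul, map_sub, PowerSeries.coeff_X_pow_mul', PowerSeries.coeff_mk,
    PowerSeries.coeff_one]
  simp only [Nat.choose_zero_right, Nat.cast_one, PowerSeries.coeff_mk]
  by_cases hn : n = 0
  · subst hn
    rw [if_pos (dvd_zero i), if_neg (by omega), sub_zero, if_pos rfl]
  · rw [if_neg hn]
    by_cases hd : i ∣ n
    · have hin : i ≤ n := Nat.le_of_dvd (Nat.pos_of_ne_zero hn) hd
      rw [if_pos hd, if_pos hin, if_pos (Nat.dvd_sub hd dvd_rfl), sub_self]
    · rw [if_neg hd]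
      by_cases hin : i ≤ n
      · rw [if_pos hin, if_neg (fun hc => hd (by
          have := Nat.dvd_add hc (dvd_refl i)
          rwa [Nat.sub_add_cancel hin] at this)), sub_zero]
      · rw [if_neg hin, sub_zero]

lemma mul_mk_succ (i t : ℕ) (hi : 1 ≤ i) :
    (1 - X ^ i : ℝ⟦X⟧) *
      PowerSeries.mk (fun a => if i ∣ a then (((a / i + (t + 1)).choose (t + 1) : ℕ) : ℝ) else 0) =
      PowerSeries.mk (fun a => if i ∣ a then (((a / i + t).choose t : ℕ) : ℝ) else 0) := by
  ext n
  rw [sub_mul, one_mul, map_sub, PowerSeries.coeff_X_pow_mul', PowerSeries.coeff_mk,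
    PowerSeries.coeff_mk, PowerSeries.coeff_mk]
  by_cases hd : i ∣ n
  · obtain ⟨c, rfl⟩ := hd
    have hi0 : 0 < i := hi
    have hdiv : i * c / i = c := Nat.mul_div_cancel_left c hi0
    by_cases hc : c = 0
    · subst hc
      simp only [Nat.mul_zero]
      rw [if_pos (dvd_zero i), if_neg (by omega : ¬ i ≤ 0), sub_zero, if_pos (dvd_zero i)]
      simp
    · have hin : i ≤ i * c := Nat.le_mul_of_pos_right i (Nat.pos_of_ne_zero hc)
      have hd2 : i ∣ i * c - i := Nat.dvd_sub (dvd_mul_right i c) dvd_rfl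
      have hdiv2 : (i * c - i) / i = c - 1 := by
        rw [show i * c - i = i * (c - 1) by
          rw [Nat.mul_sub, mul_one], Nat.mul_div_cancel_left _ hi0]
      rw [if_pos (dvd_mul_right i c), if_pos hin, if_pos hd2, if_pos (dvd_mul_right i c),
        hdiv, hdiv2]
      have hc1 : c - 1 + (t + 1) = c + t := by omega
      have hpascal : (c + (t + 1)).choose (t + 1) = (c + t).choose t + (c + t).choose (t + 1) := by
        rw [show c + (t + 1) = (c + t) + 1 from rfl]
        exact Nat.choose_succ_succ' (c + t) t
      rw [hc1, hpascal]
      push_cast; ring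
  · rw [if_neg hd, if_neg hd]
    by_cases hin : i ≤ n
    · rw [if_pos hin, if_neg (fun hc => hd (by
        have := Nat.dvd_add hc (dvd_refl i)
        rwa [Nat.sub_add_cancel hin] at this)), zero_sub, neg_zero]
    · rw [if_neg hin, sub_zero]

lemma invpow_eq_mk (i t : ℕ) (hi : 1 ≤ i) :
    ((1 - X ^ i : ℝ⟦X⟧)⁻¹) ^ (t + 1) =
      PowerSeries.mk (fun a => if i ∣ a then (((a / i + t).choose t : ℕ) : ℝ) else 0) := by
  have hc : PowerSeries.constantCoeff (1 - X ^ i : ℝ⟦X⟧) = 1 := by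
    rw [map_sub, map_one, map_pow, PowerSeries.constantCoeff_X,
      zero_pow (by omega : i ≠ 0), sub_zero]
  have hinv : (1 - X ^ i : ℝ⟦X⟧)⁻¹ * (1 - X ^ i) = 1 :=
    PowerSeries.inv_mul_cancel _ (by rw [hc]; exact one_ne_zero)
  have hmain : ∀ t : ℕ, (1 - X ^ i : ℝ⟦X⟧) ^ (t + 1) *
      PowerSeries.mk (fun a => if i ∣ a then (((a / i + t).choose t : ℕ) : ℝ) else 0) = 1 := by
    intro t
    induction t with
    | zero => rw [pow_one]; exact mul_mk_zero i hi
    | succ t ih =>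
        have hassoc : (1 - X ^ i : ℝ⟦X⟧) ^ (t + 1 + 1) *
            PowerSeries.mk (fun a =>
              if i ∣ a then (((a / i + (t + 1)).choose (t + 1) : ℕ) : ℝ) else 0) =
            (1 - X ^ i : ℝ⟦X⟧) ^ (t + 1) * ((1 - X ^ i) *
              PowerSeries.mk (fun a =>
                if i ∣ a then (((a / i + (t + 1)).choose (t + 1) : ℕ) : ℝ) else 0)) := by
          ring
        rw [hassoc, mul_mk_succ i t hi, ih]
  calc ((1 - X ^ i : ℝ⟦X⟧)⁻¹) ^ (t + 1)
      = ((1 - X ^ i : ℝ⟦X⟧)⁻¹) ^ (t + 1) * ((1 - X ^ i : ℝ⟦X⟧) ^ (t + 1) *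
          PowerSeries.mk (fun a => if i ∣ a then (((a / i + t).choose t : ℕ) : ℝ) else 0)) := by
        rw [hmain t, mul_one]
    _ = ((1 - X ^ i : ℝ⟦X⟧)⁻¹ * (1 - X ^ i)) ^ (t + 1) *
          PowerSeries.mk (fun a => if i ∣ a then (((a / i + t).choose t : ℕ) : ℝ) else 0) := by
        rw [mul_pow]; ring
    _ = PowerSeries.mk (fun a => if i ∣ a then (((a / i + t).choose t : ℕ) : ℝ) else 0) := by
        rw [hinv, one_pow, one_mul]

lemma D_eq (r : ℕ) (c1 c2 : ℝ) :
    PowerSeries.C c1 * ((1 - X : ℝ⟦X⟧)⁻¹) ^ (r + 1) -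
      PowerSeries.C c2 * ((1 - X : ℝ⟦X⟧)⁻¹) ^ (r + 2) =
      PowerSeries.mk (fun b =>
        c1 * ((b + r).choose r : ℝ) - c2 * ((b + r + 1).choose (r + 1) : ℝ)) := by
  have h1 : ((1 - X : ℝ⟦X⟧)⁻¹) ^ (r + 1) =
      PowerSeries.mk (fun b => ((b + r).choose r : ℝ)) := by
    have := invpow_eq_mk 1 r le_rfl
    rw [pow_one] at this
    rw [this]
    exact congrArg PowerSeries.mk (funext fun b => by simp)
  have h2 : ((1 - X : ℝ⟦X⟧)⁻¹) ^ (r + 2) =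
      PowerSeries.mk (fun b => ((b + r + 1).choose (r + 1) : ℝ)) := by
    have := invpow_eq_mk 1 (r + 1) le_rfl
    rw [pow_one] at this
    rw [show r + 2 = r + 1 + 1 from rfl, this]
    exact congrArg PowerSeries.mk (funext fun b => by
      simp only [Nat.one_dvd, if_true, Nat.div_one]
      norm_num [show b + (r + 1) = b + r + 1 from rfl])
  rw [h1, h2]
  ext n
  simp [PowerSeries.coeff_mk, PowerSeries.coeff_C_mul]

lemma coeff_CXmm (x e : ℕ) (c0 : ℝ) (F G : ℕ → ℝ) :
    PowerSeries.coeff x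
      (PowerSeries.C c0 * X ^ e * PowerSeries.mk F * PowerSeries.mk G) =
      if e ≤ x then c0 * ∑ a ∈ Finset.range (x - e + 1), F a * G (x - e - a) else 0 := by
  have hre : PowerSeries.C c0 * X ^ e * PowerSeries.mk F * PowerSeries.mk G =
      PowerSeries.C c0 * (X ^ e * (PowerSeries.mk F * PowerSeries.mk G)) := by ring
  rw [hre, PowerSeries.coeff_C_mul, PowerSeries.coeff_X_pow_mul']
  split_ifs with h
  · rw [PowerSeries.coeff_mul, Finset.Nat.sum_antidiagonal_eq_sum_range_succ
      (fun a b => (PowerSeries.coeff a) (PowerSeries.mk F) *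
        (PowerSeries.coeff b) (PowerSeries.mk G))]
    simp [PowerSeries.coeff_mk]
  · exact mul_zero _

/-- The inner `k`-summand appearing after expanding the coefficient. -/
noncomputable def innerK (α : ℝ) (s x r p m i k : ℕ) : ℝ :=
  ((k / i - (p + 1) + (s - r)).choose (s - r) : ℝ) *
    ((i : ℝ) ^ ((m : ℝ) + α) * zchoose ((x : ℤ) - k) r -
      ((r : ℝ) + 1) * (i : ℝ) ^ ((m : ℝ) + α - 1) * zchoose ((x : ℤ) + 1 - k) (r + 1))

lemma key (α : ℝ) (s x r p m i : ℕ) (hi : 1 ≤ i) :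
    (i : ℝ) ^ (α - 1) * PowerSeries.coeff x
      (PowerSeries.C (C4 s r p m) * X ^ ((p + 1) * i + r) * ((1 - X ^ i)⁻¹) ^ (s - r + 1) *
        (PowerSeries.C ((i : ℝ) ^ (m + 1)) * ((1 - X)⁻¹) ^ (r + 1) -
          PowerSeries.C (((r : ℝ) + 1) * (i : ℝ) ^ m) * ((1 - X)⁻¹) ^ (r + 2))) =
    C4 s r p m * ∑ k ∈ Finset.Icc 1 (x - r),
      (if i ∣ k ∧ (p + 1) * i ≤ k then innerK α s x r p m i k else 0) := by
  rw [invpow_eq_mk i (s - r) hi, D_eq, coeff_CXmm]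
  set E := (p + 1) * i with hE
  clear_value E
  have hdE : i ∣ E := by rw [hE]; exact dvd_mul_left i (p + 1)
  have hipos : (0 : ℝ) < (i : ℝ) := by exact_mod_cast hi
  have hp1 : (i : ℝ) ^ ((m : ℝ) + α) = (i : ℝ) ^ (α - 1) * (i : ℝ) ^ (m + 1) := by
    rw [← Real.rpow_natCast (i : ℝ) (m + 1), ← Real.rpow_add hipos]
    congr 1; push_cast; ring
  have hp2 : (i : ℝ) ^ ((m : ℝ) + α - 1) = (i : ℝ) ^ (α - 1) * (i : ℝ) ^ m := by
    rw [← Real.rpow_natCast (i : ℝ) m, ← Real.rpow_add hipos]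
    congr 1; push_cast; ring
  by_cases he : E + r ≤ x
  · rw [if_pos he]
    set y := x - (E + r) with hy
    clear_value y
    suffices h : (i : ℝ) ^ (α - 1) *
        (∑ a ∈ Finset.range (y + 1),
          (if i ∣ a then (((a / i + (s - r)).choose (s - r) : ℕ) : ℝ) else 0) *
            ((i : ℝ) ^ (m + 1) * ((y - a + r).choose r : ℝ) -
              ((r : ℝ) + 1) * (i : ℝ) ^ m * ((y - a + r + 1).choose (r + 1) : ℝ))) =
        ∑ k ∈ Finset.Icc 1 (x - r),
          (if i ∣ k ∧ E ≤ k then innerK α s x r p m i k else 0) by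
      rw [← h]; ring
    rw [Finset.mul_sum]
    have hterm : ∀ a ∈ Finset.range (y + 1),
        (i : ℝ) ^ (α - 1) *
          ((if i ∣ a then (((a / i + (s - r)).choose (s - r) : ℕ) : ℝ) else 0) *
            ((i : ℝ) ^ (m + 1) * ((y - a + r).choose r : ℝ) -
              ((r : ℝ) + 1) * (i : ℝ) ^ m * ((y - a + r + 1).choose (r + 1) : ℝ))) =
        (if i ∣ a then
          (i : ℝ) ^ (α - 1) * ((((a / i + (s - r)).choose (s - r) : ℕ) : ℝ) *
            ((i : ℝ) ^ (m + 1) * ((y - a + r).choose r : ℝ) -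
              ((r : ℝ) + 1) * (i : ℝ) ^ m * ((y - a + r + 1).choose (r + 1) : ℝ))) else 0) := by
      intro a _
      split_ifs with h
      · ring
      · ring
    rw [Finset.sum_congr rfl hterm, ← Finset.sum_filter, ← Finset.sum_filter]
    have hE1 : 1 ≤ E := by
      have h1 : 1 * 1 ≤ (p + 1) * i := Nat.mul_le_mul (by omega) hi
      omega
    refine Finset.sum_nbij' (fun a => a + E) (fun k => k - E) ?_ ?_ ?_ ?_ ?_
    · intro a ha
      rw [Finset.mem_filter, Finset.mem_range] at ha
      obtain ⟨ha1, ha2⟩ := ha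
      rw [Finset.mem_filter, Finset.mem_Icc]
      exact ⟨⟨by omega, by omega⟩, dvd_add ha2 hdE, by omega⟩
    · intro k hk
      rw [Finset.mem_filter, Finset.mem_Icc] at hk
      obtain ⟨⟨hk1, hk2⟩, hkd, hkE⟩ := hk
      rw [Finset.mem_filter, Finset.mem_range]
      exact ⟨by omega, Nat.dvd_sub hkd hdE⟩
    · intro a ha; omega
    · intro k hk
      rw [Finset.mem_filter, Finset.mem_Icc] at hk
      omega
    · intro a ha
      rw [Finset.mem_filter, Finset.mem_range] at ha
      obtain ⟨ha1, hda⟩ := ha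
      have ha1' : a ≤ y := by omega
      obtain ⟨c, rfl⟩ := hda
      have hi0 : 0 < i := hi
      have hdiv1 : i * c / i = c := Nat.mul_div_cancel_left c hi0
      have hdiv2 : (i * c + E) / i = c + (p + 1) := by
        rw [hE, show i * c + (p + 1) * i = i * (c + (p + 1)) by ring,
          Nat.mul_div_cancel_left _ hi0]
      have hk_le : i * c + E ≤ x - r := by omega
      have hk_le_x : i * c + E ≤ x := by omega
      have hc1 : y - i * c + r = x - (i * c + E) := by omega
      have hc2 : y - i * c + r + 1 = x + 1 - (i * c + E) := by omega
      have hz1 : zchoose ((x : ℤ) - ((i * c + E : ℕ) : ℤ)) r =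
          ((x - (i * c + E)).choose r : ℝ) := by
        rw [show (x : ℤ) - ((i * c + E : ℕ) : ℤ) = ((x - (i * c + E) : ℕ) : ℤ) by omega]
        exact zchoose_natCast _ r
      have hz2 : zchoose ((x : ℤ) + 1 - ((i * c + E : ℕ) : ℤ)) (r + 1) =
          ((x + 1 - (i * c + E)).choose (r + 1) : ℝ) := by
        rw [show (x : ℤ) + 1 - ((i * c + E : ℕ) : ℤ) = ((x + 1 - (i * c + E) : ℕ) : ℤ) by omega]
        exact zchoose_natCast _ (r + 1)
      unfold innerK
      rw [hz1, hz2, hdiv1, hdiv2, hp1, hp2, hc2, hc1]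
      rw [show c + (p + 1) - (p + 1) = c by omega]
      ring
  · rw [if_neg he]
    have : ∀ k ∈ Finset.Icc 1 (x - r), (if i ∣ k ∧ E ≤ k
        then innerK α s x r p m i k else 0) = 0 := by
      intro k hk
      rw [Finset.mem_Icc] at hk
      rw [if_neg]
      rintro ⟨-, h2⟩
      omega
    rw [Finset.sum_eq_zero this, mul_zero, mul_zero]

lemma key2 (α : ℝ) (s x i : ℕ) (hi : 1 ≤ i) :
    PowerSeries.coeff x (PowerSeries.C ((i : ℝ) ^ (α - 1)) * Sigma4 s i) =
    ∑ r ∈ Finset.range (s + 1), ∑ p ∈ Finset.range (s + 1), ∑ m ∈ Finset.range (s + 1),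
      C4 s r p m * ∑ k ∈ Finset.Icc 1 (x - r),
        (if i ∣ k ∧ (p + 1) * i ≤ k then innerK α s x r p m i k else 0) := by
  rw [PowerSeries.coeff_C_mul]
  unfold Sigma4
  rw [map_sum, Finset.mul_sum]
  refine Finset.sum_congr rfl fun r _ => ?_
  rw [map_sum, Finset.mul_sum]
  refine Finset.sum_congr rfl fun p _ => ?_
  rw [map_sum, Finset.mul_sum]
  refine Finset.sum_congr rfl fun m _ => key α s x r p m i hi

lemma div_sum (α : ℝ) (s x r p m k : ℕ) (hk1 : 1 ≤ k) (hk2 : k ≤ x - r) :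
    ∑ i ∈ Finset.Icc 1 x, (if i ∣ k ∧ (p + 1) * i ≤ k then innerK α s x r p m i k else 0) =
      zchoose ((x : ℤ) - k) r * Bfun (s - r) (p + 1) ((m : ℝ) + α) k -
        ((r : ℝ) + 1) * zchoose ((x : ℤ) + 1 - k) (r + 1) *
          Bfun (s - r) (p + 1) ((m : ℝ) + α - 1) k := by
  rw [← Finset.sum_filter]
  have hset : (Finset.Icc 1 x).filter (fun i => i ∣ k ∧ (p + 1) * i ≤ k) =
      k.divisors.filter (fun d => d ≤ k / (p + 1)) := by
    ext d
    simp only [Finset.mem_filter, Finset.mem_Icc, Nat.mem_divisors]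
    constructor
    · rintro ⟨⟨h1, h2⟩, hd, h3⟩
      refine ⟨⟨hd, by omega⟩, (Nat.le_div_iff_mul_le (by omega)).2 (by rw [mul_comm]; exact h3)⟩
    · rintro ⟨⟨hd, hk0⟩, h3⟩
      have h3' := (Nat.le_div_iff_mul_le (show 0 < p + 1 by omega)).1 h3
      have h3'' : (p + 1) * d ≤ k := by rw [mul_comm]; exact h3'
      have hdk : d ≤ k := Nat.le_of_dvd (by omega) hd
      have hd1 : 0 < d := Nat.pos_of_dvd_of_pos hd (by omega)
      exact ⟨⟨by omega, by omega⟩, hd, h3''⟩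
  rw [hset]
  unfold Bfun
  rw [Finset.mul_sum, Finset.mul_sum, ← Finset.sum_sub_distrib]
  refine Finset.sum_congr rfl fun d hd => ?_
  unfold innerK
  ring

/-- Corollary, part (i): relation of `S_{4,s,x}^{(α)}` to the
binomial divisor sums `B_{k,m}(β; n)`. -/
theorem S4_eq_binomial_divisor_sums (α : ℝ) (hα : 0 ≤ α) (s x : ℕ)
    (hs : 1 ≤ s) (hx : 1 ≤ x) :
    S4c α s x =
      ∑ r ∈ Finset.range (s + 1), ∑ p ∈ Finset.range (s + 1),
        ∑ m ∈ Finset.range (s + 1), ∑ k ∈ Finset.Icc 1 (x - r),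
          (zchoose ((x : ℤ) - k) r * Bfun (s - r) (p + 1) ((m : ℝ) + α) k -
            ((r : ℝ) + 1) * zchoose ((x : ℤ) + 1 - k) (r + 1) *
              Bfun (s - r) (p + 1) ((m : ℝ) + α - 1) k) * C4 s r p m := by
  have hswap : ∀ f : ℕ → ℕ → ℕ → ℕ → ℝ,
      (∑ i ∈ Finset.Icc 1 x, ∑ r ∈ Finset.range (s + 1), ∑ p ∈ Finset.range (s + 1),
        ∑ m ∈ Finset.range (s + 1), f i r p m) =
      ∑ r ∈ Finset.range (s + 1), ∑ p ∈ Finset.range (s + 1), ∑ m ∈ Finset.range (s + 1),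
        ∑ i ∈ Finset.Icc 1 x, f i r p m := by
    intro f
    rw [Finset.sum_comm]
    refine Finset.sum_congr rfl fun r _ => ?_
    rw [Finset.sum_comm]
    exact Finset.sum_congr rfl fun p _ => Finset.sum_comm
  unfold S4c
  rw [max_eq_left hx, map_sum]
  have h1 : (∑ i ∈ Finset.Icc 1 x,
      PowerSeries.coeff x (PowerSeries.C ((i : ℝ) ^ (α - 1)) * Sigma4 s i)) =
      ∑ i ∈ Finset.Icc 1 x, ∑ r ∈ Finset.range (s + 1), ∑ p ∈ Finset.range (s + 1),
        ∑ m ∈ Finset.range (s + 1),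
          C4 s r p m * ∑ k ∈ Finset.Icc 1 (x - r),
            (if i ∣ k ∧ (p + 1) * i ≤ k then innerK α s x r p m i k else 0) := by
    refine Finset.sum_congr rfl fun i hi => ?_
    rw [Finset.mem_Icc] at hi
    exact key2 α s x i hi.1
  rw [h1, hswap]
  refine Finset.sum_congr rfl fun r _ => Finset.sum_congr rfl fun p _ =>
    Finset.sum_congr rfl fun m _ => ?_
  rw [← Finset.mul_sum, Finset.sum_comm, Finset.mul_sum]
  refine Finset.sum_congr rfl fun k hk => ?_
  rw [Finset.mem_Icc] at hk
  rw [div_sum α s x r p m k hk.1 hk.2]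
  ring
end

section
/- For every real number α ≥ 0 and all integers s ≥ 1 and x ≥ 1, S_{8,s,x}^{(α)} = ∑_{r=0}^{s} ∑_{p=0}^{s} ∑_{w=0}^{s} ∑_{n=0}^{r+1} ∑_{k=1}^{x+1−n} ( C(x+1−n−k+r, r) · C(r,n) − C(x+2−n−k+r, r+1) · C(r+1,n) ) · C_{8,s}(r,p,n,w) · B_{s−r,p+2}(w+α−1; k), where S_{8,s,x}^{(α)} is the coefficient of q^x in ∑_{i=1}^{x+1} i^{α−1} · Σ_{8,s}(q,i). -/
open PowerSeries Finset

lemma sum_filter_dvd {M : Type*} [AddCommMonoid M] (i N : ℕ) (hi : 0 < i) (g : ℕ → M) :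
    ∑ b ∈ (range (N+1)).filter (i ∣ ·), g b = ∑ j ∈ range (N/i + 1), g (i*j) := by
  apply Finset.sum_nbij' (fun b => b / i) (fun j => i * j)
  · intro b hb
    simp only [mem_filter, mem_range, Nat.lt_succ_iff] at hb ⊢
    exact Nat.div_le_div_right hb.1
  · intro j hj
    simp only [mem_filter, mem_range, Nat.lt_succ_iff] at hj ⊢
    exact ⟨by rw [Nat.mul_comm]; exact (Nat.le_div_iff_mul_le hi).mp hj, Dvd.intro _ rfl⟩
  · intro b hb
    simp only [mem_filter] at hb
    exact Nat.mul_div_cancel' hb.2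
  · intro j _
    exact Nat.mul_div_cancel_left _ hi
  · intro b hb
    simp only [mem_filter] at hb
    rw [Nat.mul_div_cancel' hb.2]

lemma hockey (M t : ℕ) : ∑ j ∈ range (M+1), (j+t).choose t = (M+t+1).choose (t+1) := by
  have h := Nat.sum_Icc_choose (M+t) t
  rw [← Finset.Ico_add_one_right_eq_Icc, Finset.sum_Ico_eq_sum_range, show M + t + 1 - t = M + 1 by omega] at h
  simpa [Nat.succ_sub, Nat.add_sub_cancel, add_comm] using h

lemma inv_one_sub_X_pow (i : ℕ) (hi : 0 < i) :
    (1 - X^i : ℝ⟦X⟧)⁻¹ = mk (fun b => if i ∣ b then (1:ℝ) else 0) := by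
  rw [PowerSeries.inv_eq_iff_mul_eq_one]
  · ext n
    rw [mul_sub, mul_one, map_sub, PowerSeries.coeff_mul_X_pow']
    rcases Nat.eq_zero_or_pos n with rfl | hn
    · simp [hi.ne']
    · rw [PowerSeries.coeff_one, if_neg hn.ne']
      by_cases h : i ∣ n
      · have hin : i ≤ n := Nat.le_of_dvd hn h
        rw [coeff_mk, coeff_mk, if_pos h, if_pos hin, if_pos ((Nat.dvd_sub h dvd_rfl))]
        ring
      · rw [coeff_mk, if_neg h]
        by_cases hin : i ≤ n
        · rw [if_pos hin, coeff_mk, if_neg fun hd => h (by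
            have := Nat.dvd_add hd (dvd_refl i)
            rwa [Nat.sub_add_cancel hin] at this)]
          ring
        · rw [if_neg hin]; ring
  · simp [hi.ne']

lemma inv_one_sub_X_pow_pow (i t : ℕ) (hi : 0 < i) :
    ((1 - X^i : ℝ⟦X⟧)⁻¹)^(t+1) = mk (fun b => if i ∣ b then (((b/i)+t).choose t : ℝ) else 0) := by
  induction t with
  | zero => simpa using inv_one_sub_X_pow i hi
  | succ t ih =>
    rw [pow_succ, ih, inv_one_sub_X_pow i hi]
    ext n
    rw [PowerSeries.coeff_mul, Finset.Nat.sum_antidiagonal_eq_sum_range_succ_mk]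
    simp only [coeff_mk]
    by_cases h : i ∣ n
    · rw [if_pos h]
      have step : ∀ b ∈ range (n+1),
          (if i ∣ b then (((b/i)+t).choose t : ℝ) else 0) * (if i ∣ (n - b) then (1:ℝ) else 0)
          = if i ∣ b then (((b/i)+t).choose t : ℝ) else 0 := by
        intro b hb
        by_cases hib : i ∣ b
        · simp [hib, Nat.dvd_sub h hib]
        · simp [hib]
      rw [Finset.sum_congr rfl step, ← Finset.sum_filter, sum_filter_dvd i n hi]
      have : ∀ j ∈ range (n/i + 1), ((i*j/i + t).choose t : ℝ) = (((j+t).choose t : ℕ) : ℝ) := by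
        intro j _; rw [Nat.mul_div_cancel_left _ hi]
      rw [Finset.sum_congr rfl this, ← Nat.cast_sum, hockey, add_assoc]
    · rw [if_neg h]
      apply Finset.sum_eq_zero
      intro b hb
      simp only [mem_range, Nat.lt_succ_iff] at hb
      by_cases hib : i ∣ b
      · have hnd : ¬ i ∣ (n - b) := fun hd => h (by
          have := Nat.dvd_add hd hib
          rwa [Nat.sub_add_cancel hb] at this)
        simp [hib, hnd]
      · simp [hib]

lemma inv_one_sub_pow (u : ℕ) :
    ((1 - X : ℝ⟦X⟧)⁻¹)^(u+1) = mk (fun c => ((c+u).choose u : ℝ)) := by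
  have h := inv_one_sub_X_pow_pow 1 u one_pos
  simpa using h

lemma C_mul_mk_sub (c1 c2 : ℝ) (g1 g2 : ℕ → ℝ) :
    PowerSeries.C c1 * mk g1 - PowerSeries.C c2 * mk g2
      = mk (fun c => c1 * g1 c - c2 * g2 c) := by
  ext n
  simp [PowerSeries.coeff_C_mul]

lemma coeff_FG (m i t : ℕ) (hi : 0 < i) (G : ℕ → ℝ) :
    (PowerSeries.coeff m) (PowerSeries.mk (fun b => if i ∣ b then (((b/i)+t).choose t : ℝ) else 0) * PowerSeries.mk G)
      = ∑ j ∈ range (m/i + 1), ((j+t).choose t : ℝ) * G (m - i*j) := by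
  rw [PowerSeries.coeff_mul, Finset.Nat.sum_antidiagonal_eq_sum_range_succ_mk]
  simp only [coeff_mk]
  have step : ∀ b ∈ range (m+1),
      (if i ∣ b then (((b/i)+t).choose t : ℝ) else 0) * G (m - b)
        = if i ∣ b then (((b/i)+t).choose t : ℝ) * G (m - b) else 0 := by
    intro b _; split <;> simp
  rw [Finset.sum_congr rfl step, ← Finset.sum_filter, sum_filter_dvd i m hi]
  refine Finset.sum_congr rfl fun j _ => ?_
  rw [Nat.mul_div_cancel_left _ hi]

lemma coeff_atom (x A i t r : ℕ) (hi : 0 < i) (c1 c2 : ℝ) :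
    (PowerSeries.coeff x) (X^A * ((1-X^i:ℝ⟦X⟧)⁻¹)^(t+1) *
        (PowerSeries.C c1 * ((1-X:ℝ⟦X⟧)⁻¹)^(r+1) -
          PowerSeries.C c2 * ((1-X:ℝ⟦X⟧)⁻¹)^(r+2)))
      = if A ≤ x then
          ∑ j ∈ range ((x-A)/i + 1), ((j+t).choose t : ℝ) *
            (c1 * (((x-A-i*j)+r).choose r : ℝ) - c2 * (((x-A-i*j)+(r+1)).choose (r+1) : ℝ))
        else 0 := by
  have h2 : ((1-X:ℝ⟦X⟧)⁻¹)^(r+2) = ((1-X:ℝ⟦X⟧)⁻¹)^((r+1)+1) := by ring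
  rw [inv_one_sub_X_pow_pow i t hi, h2, inv_one_sub_pow r, inv_one_sub_pow (r+1),
    C_mul_mk_sub, mul_assoc, PowerSeries.coeff_X_pow_mul']
  split
  · rw [coeff_FG _ i t hi]
  · rfl

lemma zchoose_natCast_s13 (N r : ℕ) : zchoose (N : ℤ) r = (N.choose r : ℝ) := by
  unfold zchoose
  rcases le_or_gt r N with h | h
  · have hprod : ∏ i ∈ Finset.range r, (((N:ℤ):ℝ) - (i:ℝ)) = (N.descFactorial r : ℝ) := by
      rw [Nat.descFactorial_eq_prod_range, Nat.cast_prod]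
      refine Finset.prod_congr rfl fun i hi => ?_
      have : i ≤ N := le_trans (Nat.le_of_lt_succ (Nat.lt_succ_of_lt (mem_range.mp hi))) h
      push_cast [Nat.cast_sub this]
      ring
    rw [hprod, Nat.descFactorial_eq_factorial_mul_choose]
    push_cast
    rw [mul_comm]
    field_simp
  · rw [Finset.prod_eq_zero (mem_range.mpr h) (by push_cast; ring),
      Nat.choose_eq_zero_of_lt h]
    simp

lemma divisor_swap (N m' : ℕ) (hm : 0 < m') (f : ℕ → ℕ → ℝ) :
    ∑ k ∈ Icc 1 N, ∑ d ∈ k.divisors.filter (fun d => d ≤ k / m'), f d k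
      = ∑ d ∈ Icc 1 N, ∑ e ∈ Icc m' (N/d), f d (d*e) := by
  rw [Finset.sum_sigma', Finset.sum_sigma']
  apply Finset.sum_nbij' (fun q => (⟨q.2, q.1/q.2⟩ : Σ _ : ℕ, ℕ))
    (fun q => (⟨q.1*q.2, q.1⟩ : Σ _ : ℕ, ℕ))
  · rintro ⟨k, d⟩ hq
    simp only [mem_sigma, mem_Icc, Nat.mem_divisors, mem_filter] at hq ⊢
    obtain ⟨⟨hk1, hkN⟩, ⟨hdvd, hk0⟩, hdle⟩ := hq
    have hd0 : 0 < d := Nat.pos_of_dvd_of_pos hdvd hk1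
    refine ⟨⟨hd0, le_trans (Nat.le_of_dvd hk1 hdvd) hkN⟩, ?_, Nat.div_le_div_right hkN⟩
    rw [Nat.le_div_iff_mul_le hd0, Nat.mul_comm]
    exact (Nat.le_div_iff_mul_le hm).mp hdle
  · rintro ⟨d, e⟩ hq
    simp only [mem_sigma, mem_Icc, Nat.mem_divisors, mem_filter] at hq ⊢
    obtain ⟨⟨hd1, hdN⟩, hme, heN⟩ := hq
    have hde : d * e ≤ N := by
      rw [Nat.mul_comm]
      exact (Nat.le_div_iff_mul_le hd1).mp heN
    have hpos : 0 < d * e := Nat.mul_pos hd1 (lt_of_lt_of_le hm hme)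
    refine ⟨⟨hpos, hde⟩, ⟨Dvd.intro _ rfl, hpos.ne'⟩, ?_⟩
    rw [Nat.le_div_iff_mul_le hm]
    exact Nat.mul_le_mul_left d hme
  · rintro ⟨k, d⟩ hq
    simp only [mem_sigma, mem_Icc, Nat.mem_divisors, mem_filter] at hq
    simp [Nat.mul_div_cancel' hq.2.1.1]
  · rintro ⟨d, e⟩ hq
    simp only [mem_sigma, mem_Icc] at hq
    simp [Nat.mul_div_cancel_left _ (by omega : 0 < d)]
  · rintro ⟨k, d⟩ hq
    simp only [mem_sigma, mem_Icc, Nat.mem_divisors, mem_filter] at hq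
    simp [Nat.mul_div_cancel' hq.2.1.1]

noncomputable def LHSterm (α : ℝ) (s x r p n w i : ℕ) : ℝ :=
  (i:ℝ)^(α-1) * ((C8 s r p n w * (i:ℝ)^w) *
    (if (p+2)*i+n-1 ≤ x then
      ∑ j ∈ range ((x-((p+2)*i+n-1))/i + 1), ((j+(s-r)).choose (s-r) : ℝ) *
        ((r.choose n : ℝ) * (((x-((p+2)*i+n-1)-i*j)+r).choose r : ℝ)
         - ((r+1).choose n : ℝ) * (((x-((p+2)*i+n-1)-i*j)+(r+1)).choose (r+1) : ℝ))
     else 0))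

lemma coeff_atom2 (x A i t r : ℕ) (hi : 0 < i) (a c0 c1 c2 : ℝ) :
    (PowerSeries.coeff x) (PowerSeries.C a *
        (PowerSeries.C c0 * X^A * ((1-X^i:ℝ⟦X⟧)⁻¹)^(t+1) *
        (PowerSeries.C c1 * ((1-X:ℝ⟦X⟧)⁻¹)^(r+1) -
          PowerSeries.C c2 * ((1-X:ℝ⟦X⟧)⁻¹)^(r+2))))
      = a * (c0 * (if A ≤ x then
          ∑ j ∈ range ((x-A)/i + 1), ((j+t).choose t : ℝ) *
            (c1 * (((x-A-i*j)+r).choose r : ℝ) - c2 * (((x-A-i*j)+(r+1)).choose (r+1) : ℝ))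
        else 0)) := by
  rw [PowerSeries.coeff_C_mul, mul_assoc (PowerSeries.C c0),
    mul_assoc (PowerSeries.C c0), PowerSeries.coeff_C_mul, coeff_atom x A i t r hi c1 c2]

lemma lemA (α : ℝ) (s x : ℕ) :
    S8c α s x = ∑ i ∈ Finset.Icc 1 (x+1), ∑ r ∈ range (s+1), ∑ p ∈ range (s+1),
      ∑ n ∈ range (r+2), ∑ w ∈ range (s+1), LHSterm α s x r p n w i := by
  unfold S8c Sigma8
  rw [map_sum]
  refine Finset.sum_congr rfl fun i hi => ?_
  have hi1 : 0 < i := (Finset.mem_Icc.mp hi).1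
  rw [Finset.mul_sum, map_sum]
  refine Finset.sum_congr rfl fun r hr => ?_
  rw [Finset.mul_sum, map_sum]
  refine Finset.sum_congr rfl fun p hp => ?_
  rw [Finset.mul_sum, map_sum]
  refine Finset.sum_congr rfl fun n hn => ?_
  rw [Finset.mul_sum, map_sum]
  refine Finset.sum_congr rfl fun w hw => ?_
  rw [coeff_atom2 x ((p+2)*i+n-1) i (s-r) r hi1]
  rfl

noncomputable def RHSf (α : ℝ) (s x r p n w : ℕ) (d k : ℕ) : ℝ :=
  (zchoose ((x:ℤ)+1-n-k+r) r * (r.choose n : ℝ) -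
    zchoose ((x:ℤ)+2-n-k+r) (r+1) * ((r+1).choose n : ℝ)) * C8 s r p n w *
    (((k/d - (p+2) + (s-r)).choose (s-r) : ℝ) * (d:ℝ)^((w:ℝ)+α-1))

lemma lemB (α : ℝ) (s x r p n w : ℕ) :
    ∑ k ∈ Finset.Icc 1 (x+1-n),
      (zchoose ((x:ℤ)+1-n-k+r) r * (r.choose n : ℝ) -
        zchoose ((x:ℤ)+2-n-k+r) (r+1) * ((r+1).choose n : ℝ)) *
        C8 s r p n w * Bfun (s-r) (p+2) ((w:ℝ)+α-1) k
    = ∑ d ∈ Finset.Icc 1 (x+1), ∑ e ∈ Finset.Icc (p+2) ((x+1-n)/d),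
        RHSf α s x r p n w d (d*e) := by
  have h1 : ∀ k ∈ Finset.Icc 1 (x+1-n),
      (zchoose ((x:ℤ)+1-n-k+r) r * (r.choose n : ℝ) -
        zchoose ((x:ℤ)+2-n-k+r) (r+1) * ((r+1).choose n : ℝ)) *
        C8 s r p n w * Bfun (s-r) (p+2) ((w:ℝ)+α-1) k
      = ∑ d ∈ k.divisors.filter (fun d => d ≤ k / (p+2)), RHSf α s x r p n w d k := by
    intro k _
    unfold Bfun RHSf
    rw [Finset.mul_sum]
  rw [Finset.sum_congr rfl h1, divisor_swap (x+1-n) (p+2) (by omega)]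
  refine Finset.sum_subset (Finset.Icc_subset_Icc_right (by omega)) fun d hd hnd => ?_
  simp only [Finset.mem_Icc] at hd hnd
  have hdx : x+1-n < d := by omega
  rw [Nat.div_eq_of_lt hdx, Finset.Icc_eq_empty (by omega), Finset.sum_empty]

lemma lemC (α : ℝ) (s x r p n w i : ℕ) (hi : 1 ≤ i) :
    LHSterm α s x r p n w i
      = ∑ e ∈ Finset.Icc (p+2) ((x+1-n)/i), RHSf α s x r p n w i (i*e) := by
  have hpi : i ≤ (p+2)*i := Nat.le_mul_of_pos_left i (by omega)
  unfold LHSterm RHSf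
  by_cases h : (p+2)*i+n-1 ≤ x
  · have hA : (p+2)*i + n ≤ x + 1 := by omega
    have hm' : x - ((p+2)*i+n-1) = x+1-n - i*(p+2) := by
      have : i*(p+2) = (p+2)*i := Nat.mul_comm _ _
      omega
    have hle : i*(p+2) ≤ x+1-n := by
      have : i*(p+2) = (p+2)*i := Nat.mul_comm _ _
      omega
    have hdiv : (x - ((p+2)*i+n-1)) / i = (x+1-n)/i - (p+2) := by
      rw [hm', Nat.sub_mul_div _ _ _]
    have hge : p+2 ≤ (x+1-n)/i := by
      rw [Nat.le_div_iff_mul_le (by omega)]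
      have : (p+2)*i = i*(p+2) := Nat.mul_comm _ _
      omega
    rw [if_pos h, ← Finset.Ico_add_one_right_eq_Icc, Finset.sum_Ico_eq_sum_range]
    have hcount : (x+1-n)/i + 1 - (p+2) = (x - ((p+2)*i+n-1))/i + 1 := by omega
    rw [hcount, Finset.mul_sum, Finset.mul_sum]
    refine Finset.sum_congr rfl fun j hj => ?_
    simp only [Finset.mem_range, Nat.lt_succ_iff] at hj
    have hij : i*j ≤ x - ((p+2)*i+n-1) := by
      have h2 := (Nat.le_div_iff_mul_le (show 0 < i by omega)).mp hj
      have : j*i = i*j := Nat.mul_comm _ _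
      omega
    have hmul : i*((p+2)+j) = i*(p+2) + i*j := Nat.left_distrib _ _ _
    have e1 : i*((p+2)+j)/i = (p+2)+j := Nat.mul_div_cancel_left _ (by omega)
    have e2 : (p+2)+j - (p+2) + (s-r) = j + (s-r) := by omega
    have hz1 : (x:ℤ)+1-(n:ℕ)-(i*((p+2)+j) : ℕ)+(r:ℕ)
        = ((x - ((p+2)*i+n-1) - i*j + r : ℕ) : ℤ) := by
      have : i*(p+2) = (p+2)*i := Nat.mul_comm _ _
      omega
    have hz2 : (x:ℤ)+2-(n:ℕ)-(i*((p+2)+j) : ℕ)+(r:ℕ)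
        = ((x - ((p+2)*i+n-1) - i*j + (r+1) : ℕ) : ℤ) := by
      have : i*(p+2) = (p+2)*i := Nat.mul_comm _ _
      omega
    have hrp : ((i:ℝ))^((w:ℝ)+α-1) = (i:ℝ)^(w:ℕ) * (i:ℝ)^(α-1) := by
      rw [show (w:ℝ)+α-1 = (w:ℝ)+(α-1) by ring,
        Real.rpow_add (by positivity), Real.rpow_natCast]
    rw [e1, e2, hz1, hz2, zchoose_natCast_s13, zchoose_natCast_s13, hrp]
    ring
  · rw [if_neg h, mul_zero, mul_zero]
    have hlt : (x+1-n)/i < p+2 := by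
      rw [Nat.div_lt_iff_lt_mul (by omega : 0 < i)]
      omega
    rw [Finset.Icc_eq_empty (by omega), Finset.sum_empty]

/-- Corollary, part (ii): relation of `S_{8,s,x}^{(α)}` to the
binomial divisor sums `B_{k,m}(β; n)`. -/
theorem S8_eq_binomial_divisor_sums (α : ℝ) (hα : 0 ≤ α) (s x : ℕ)
    (hs : 1 ≤ s) (hx : 1 ≤ x) :
    S8c α s x =
      ∑ r ∈ Finset.range (s + 1), ∑ p ∈ Finset.range (s + 1),
        ∑ w ∈ Finset.range (s + 1), ∑ n ∈ Finset.range (r + 2),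
          ∑ k ∈ Finset.Icc 1 (x + 1 - n),
            (zchoose ((x : ℤ) + 1 - n - k + r) r * (r.choose n : ℝ) -
              zchoose ((x : ℤ) + 2 - n - k + r) (r + 1) * ((r + 1).choose n : ℝ)) *
              C8 s r p n w * Bfun (s - r) (p + 2) ((w : ℝ) + α - 1) k := by
  rw [lemA]
  trans (∑ r ∈ Finset.range (s+1), ∑ p ∈ Finset.range (s+1), ∑ w ∈ Finset.range (s+1),
      ∑ i ∈ Finset.Icc 1 (x+1), ∑ n ∈ Finset.range (r+2), LHSterm α s x r p n w i)
  · rw [Finset.sum_comm]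
    refine Finset.sum_congr rfl fun r _ => ?_
    rw [Finset.sum_comm]
    refine Finset.sum_congr rfl fun p _ => ?_
    rw [Finset.sum_congr rfl fun i (_ : i ∈ Finset.Icc 1 (x+1)) =>
      (Finset.sum_comm (s := Finset.range (r+2)) (t := Finset.range (s+1))
        (f := fun n w => LHSterm α s x r p n w i)), Finset.sum_comm]
  · refine Finset.sum_congr rfl fun r _ => Finset.sum_congr rfl fun p _ =>
      Finset.sum_congr rfl fun w _ => ?_
    rw [Finset.sum_congr rfl fun i hi => Finset.sum_congr rfl fun n _ =>
      lemC α s x r p n w i (Finset.mem_Icc.mp hi).1, Finset.sum_comm]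
    exact Finset.sum_congr rfl fun n _ => (lemB α s x r p n w).symm
end

section
/- For every integer x ≥ 1, the divisor function d(x) = σ_0(x) satisfies C(x,2) · d(x) = ∑_{k=1}^{x−1} τ_{2,x}^{(0)}(k) + ρ_2^{(0)}(x), where τ_{2,x}^{(0)}(k) := (1/4) · ( (3k−2)·σ_0(k) − (k−1)·σ_1(k) − σ_2(k) ) + (1/4) · ( k²·σ_{−2,3}(k) + k(k−3)·σ_{−1,3}(k) − (3k−2)·σ_{0,3}(k) + 2·σ_{1,3}(k) ) and ρ_2^{(0)}(x) := (1/4) · ( (−2+x+2x²)·σ_0(x) − (x−1)·σ_1(x) − σ_2(x) ) + (1/4) · ( x²·σ_{−2,3}(x) + x(x−3)·σ_{−1,3}(x) − (3x−2)·σ_{0,3}(x) + 2·σ_{1,3}(x) ). -/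
open Finset

set_option linter.unusedVariables false

/-- `τ_{2,x}^{(0)}(k)`. -/
noncomputable def tau20 (x k : ℕ) : ℝ :=
  (1 / 4) * ((3 * (k : ℝ) - 2) * sigma' 0 k - ((k : ℝ) - 1) * sigma' 1 k - sigma' 2 k) +
  (1 / 4) * ((k : ℝ) ^ 2 * sigmaB (-2) 3 k + (k : ℝ) * ((k : ℝ) - 3) * sigmaB (-1) 3 k -
    (3 * (k : ℝ) - 2) * sigmaB 0 3 k + 2 * sigmaB 1 3 k)

/-- `ρ_{2}^{(0)}(x)`. -/
noncomputable def rho20 (x : ℕ) : ℝ :=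
  (1 / 4) * ((-2 + (x : ℝ) + 2 * (x : ℝ) ^ 2) * sigma' 0 x - ((x : ℝ) - 1) * sigma' 1 x -
    sigma' 2 x) +
  (1 / 4) * ((x : ℝ) ^ 2 * sigmaB (-2) 3 x + (x : ℝ) * ((x : ℝ) - 3) * sigmaB (-1) 3 x -
    (3 * (x : ℝ) - 2) * sigmaB 0 3 x + 2 * sigmaB 1 3 x)

namespace DFEF

/-- The per-divisor weight from the unbounded part. -/
noncomputable def A (k d : ℕ) : ℝ := (3 * (k : ℝ) - 2) - ((k : ℝ) - 1) * d - (d : ℝ) ^ 2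

lemma hA (k : ℕ) :
    (3 * (k : ℝ) - 2) * sigma' 0 k - ((k : ℝ) - 1) * sigma' 1 k - sigma' 2 k
      = ∑ d ∈ k.divisors, A k d := by
  simp only [sigma', Finset.mul_sum, ← Finset.sum_sub_distrib]
  refine Finset.sum_congr rfl fun d hd => ?_
  rw [A, Real.rpow_zero, Real.rpow_one,
    show (2 : ℝ) = ((2 : ℕ) : ℝ) by norm_num, Real.rpow_natCast]
  ring

lemma hB (k : ℕ) (hk : 0 < k) :
    (k : ℝ) ^ 2 * sigmaB (-2) 3 k + (k : ℝ) * ((k : ℝ) - 3) * sigmaB (-1) 3 k -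
      (3 * (k : ℝ) - 2) * sigmaB 0 3 k + 2 * sigmaB 1 3 k
      = ∑ e ∈ k.divisors.filter (fun e => 3 ≤ e),
          (-(A k e) + (2 * ((k / e : ℕ) : ℝ) - 2 * (e : ℝ))) := by
  have hk0 : k ≠ 0 := hk.ne'
  have hF : k.divisors.filter (fun d => d ≤ k / 3)
      = k.divisors.filter (fun d => 3 * d ≤ k) := by
    apply Finset.filter_congr
    intro d _
    simp [Nat.le_div_iff_mul_le (by norm_num : 0 < 3), mul_comm]
  simp only [sigmaB, hF, Finset.mul_sum, ← Finset.sum_add_distrib, ← Finset.sum_sub_distrib]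
  refine Finset.sum_nbij' (fun d => k / d) (fun e => k / e) ?_ ?_ ?_ ?_ ?_
  · intro d hd
    simp only [Finset.mem_filter, Nat.mem_divisors] at hd ⊢
    obtain ⟨⟨hdvd, _⟩, h3⟩ := hd
    have hdpos : 0 < d := Nat.pos_of_dvd_of_pos hdvd hk
    refine ⟨⟨Nat.div_dvd_of_dvd hdvd, hk0⟩, ?_⟩
    rw [Nat.le_div_iff_mul_le hdpos]
    omega
  · intro e he
    simp only [Finset.mem_filter, Nat.mem_divisors] at he ⊢
    obtain ⟨⟨hdvd, _⟩, h3⟩ := he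
    refine ⟨⟨Nat.div_dvd_of_dvd hdvd, hk0⟩, ?_⟩
    calc 3 * (k / e) ≤ e * (k / e) := Nat.mul_le_mul_right _ h3
      _ = k := Nat.mul_div_cancel' hdvd
  · intro d hd
    simp only [Finset.mem_filter, Nat.mem_divisors] at hd
    exact Nat.div_div_self hd.1.1 hk0
  · intro e he
    simp only [Finset.mem_filter, Nat.mem_divisors] at he
    exact Nat.div_div_self he.1.1 hk0
  · intro d hd
    simp only [Finset.mem_filter, Nat.mem_divisors] at hd
    obtain ⟨⟨hdvd, _⟩, h3⟩ := hd
    have hdpos : 0 < d := Nat.pos_of_dvd_of_pos hdvd hk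
    obtain ⟨e, rfl⟩ := hdvd
    have hepos : 0 < e := by
      rcases Nat.eq_zero_or_pos e with h | h
      · subst h; simp at hk
      · exact h
    have h1 : d * e / d = e := Nat.mul_div_cancel_left e hdpos
    rw [h1, Nat.mul_div_cancel d hepos, A]
    have hr2 : ((d:ℝ)) ^ (-2 : ℝ) = ((d:ℝ) ^ 2)⁻¹ := by
      rw [show (-2 : ℝ) = -(2:ℝ) by norm_num, Real.rpow_neg (Nat.cast_nonneg d),
        show (2 : ℝ) = ((2:ℕ) : ℝ) by norm_num, Real.rpow_natCast]
    have hr1 : ((d:ℝ)) ^ (-1 : ℝ) = ((d:ℝ))⁻¹ := by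
      rw [show (-1 : ℝ) = -(1:ℝ) by norm_num, Real.rpow_neg (Nat.cast_nonneg d),
        Real.rpow_one]
    rw [hr2, hr1, Real.rpow_zero, Real.rpow_one]
    have hd0 : (d : ℝ) ≠ 0 := by positivity
    push_cast
    field_simp
    ring

lemma tau20_eq_zero (x k : ℕ) : tau20 x k = 0 := by
  rcases Nat.eq_zero_or_pos k with hk | hk
  · subst hk; simp [tau20, sigma', sigmaB]
  have hk0 : k ≠ 0 := hk.ne'
  rw [tau20, hA k, hB k hk]
  set S := k.divisors with hS
  have h1 : ∑ e ∈ S.filter (fun e => 3 ≤ e), A k e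
      + ∑ e ∈ S.filter (fun e => ¬ 3 ≤ e), A k e = ∑ e ∈ S, A k e :=
    Finset.sum_filter_add_sum_filter_not S _ _
  have h2 : ∑ e ∈ S.filter (fun e => 3 ≤ e), (2 * ((k / e : ℕ) : ℝ) - 2 * (e : ℝ))
      + ∑ e ∈ S.filter (fun e => ¬ 3 ≤ e), (2 * ((k / e : ℕ) : ℝ) - 2 * (e : ℝ))
      = ∑ e ∈ S, (2 * ((k / e : ℕ) : ℝ) - 2 * (e : ℝ)) :=
    Finset.sum_filter_add_sum_filter_not S _ _
  have h3 : ∑ e ∈ S, (2 * ((k / e : ℕ) : ℝ) - 2 * (e : ℝ)) = 0 := by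
    rw [Finset.sum_sub_distrib,
      show ∑ e ∈ S, 2 * ((k / e : ℕ) : ℝ) = ∑ e ∈ S, 2 * (e : ℝ) from
        Nat.sum_div_divisors k (fun d => 2 * (d : ℝ)), sub_self]
  have h4 : ∑ e ∈ S.filter (fun e => ¬ 3 ≤ e),
      (A k e - (2 * ((k / e : ℕ) : ℝ) - 2 * (e : ℝ))) = 0 := by
    refine Finset.sum_eq_zero fun e he => ?_
    simp only [Finset.mem_filter, hS, Nat.mem_divisors] at he
    obtain ⟨⟨hdvd, _⟩, h3e⟩ := he
    have hepos : 0 < e := Nat.pos_of_dvd_of_pos hdvd hk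
    interval_cases e
    · simp only [Nat.div_one, A]
      push_cast
      ring
    · have : ((k / 2 : ℕ) : ℝ) = (k : ℝ) / 2 :=
        Nat.cast_div hdvd (by norm_num)
      rw [this, A]
      push_cast
      ring
  rw [Finset.sum_sub_distrib] at h4
  rw [Finset.sum_add_distrib, Finset.sum_neg_distrib]
  linarith

end DFEF

/-- for every `x ≥ 1`,
`C(x,2) d(x) = ∑_{k=1}^{x-1} τ_{2,x}^{(0)}(k) + ρ_2^{(0)}(x)`, where `d(x) = σ_0(x)`. -/
theorem divisor_function_exact_formula (x : ℕ) (hx : 1 ≤ x) :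
    (x.choose 2 : ℝ) * sigma' 0 x = ∑ k ∈ Finset.Icc 1 (x - 1), tau20 x k + rho20 x := by
  have h1 : ∑ k ∈ Finset.Icc 1 (x - 1), tau20 x k = 0 :=
    Finset.sum_eq_zero fun k _ => DFEF.tau20_eq_zero x k
  have h2 : rho20 x = tau20 x x + (x.choose 2 : ℝ) * sigma' 0 x := by
    rw [Nat.cast_choose_two, tau20, rho20]
    ring
  rw [h1, h2, DFEF.tau20_eq_zero]
  ring
end
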